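/- Let n, m ≥ 1, let J ∈ ℝ^{n×n}, let λ ∈ ℝ be a simple eigenvalue of J with eigenvector v ≠ 0, Jv = λv, let V ∈ ℝ^{n×(n−1)} have rank n−1 with Vᵀv = 0, and set Z = V (Vᵀ(J − λI)V)⁻¹ Vᵀ. Let f₁,…,f_m ∈ ℝ and weights w₁,…,w_m ≥ 0. Consider the set S_sym^F = { ‖Z (Σᵢ₌₁ᵐ fᵢ Eᵢ v)‖ / ‖v‖ : E₁,…,E_m ∈ ℝ^{n×n} symmetric (Eᵢᵀ = Eᵢ) with ‖Eᵢ‖_F ≤ wᵢ for all i }. Then the greatest element of S_sym^F equals (1/√2) · ‖Z‖₂ · (Σᵢ₌₁ᵐ |fᵢ| wᵢ): every element of S_sym^F is ≤ this value, and it is attained, e.g. by Eᵢ = sign(fᵢ) wᵢ (pvᵀ + vpᵀ)/(√2 ‖v‖) where p is a unit right singular vector of Z corresponding to its largest singular value. -/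

import Mathlib

open Matrix

/-- Euclidean norm of a vector in `ℝⁿ`. -/
noncomputable def e2norm {n : ℕ} (v : Fin n → ℝ) : ℝ := Real.sqrt (∑ i, v i ^ 2)

/-- Frobenius norm of a real matrix. -/
noncomputable def frobNorm {n m : ℕ} (M : Matrix (Fin n) (Fin m) ℝ) : ℝ :=
  Real.sqrt (∑ i, ∑ j, M i j ^ 2)

/-- Spectral norm: the supremum of `‖M x‖` over Euclidean-unit vectors `x`. -/
noncomputable def specNorm {n m : ℕ} (M : Matrix (Fin n) (Fin m) ℝ) : ℝ :=
  sSup ((fun x => e2norm (M.mulVec x)) '' {x : Fin m → ℝ | e2norm x = 1})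

/-! ### Auxiliary lemmas -/

lemma e2norm_nonneg' {n : ℕ} (v : Fin n → ℝ) : 0 ≤ e2norm v := Real.sqrt_nonneg _

lemma e2norm_zero' {n : ℕ} : e2norm (0 : Fin n → ℝ) = 0 := by simp [e2norm]

lemma sum_sq_nonneg' {n : ℕ} (v : Fin n → ℝ) : 0 ≤ ∑ i, v i ^ 2 :=
  Finset.sum_nonneg fun _ _ => sq_nonneg _

lemma e2norm_sq' {n : ℕ} (v : Fin n → ℝ) : e2norm v ^ 2 = ∑ i, v i ^ 2 :=
  Real.sq_sqrt (sum_sq_nonneg' v)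

lemma e2norm_smul' {n : ℕ} (c : ℝ) (v : Fin n → ℝ) : e2norm (c • v) = |c| * e2norm v := by
  unfold e2norm
  have h : ∑ i, (c • v) i ^ 2 = c ^ 2 * ∑ i, v i ^ 2 := by
    rw [Finset.mul_sum]; exact Finset.sum_congr rfl fun i _ => by simp [mul_pow]
  rw [h, Real.sqrt_mul (sq_nonneg c), Real.sqrt_sq_eq_abs]

lemma e2norm_pos' {n : ℕ} {v : Fin n → ℝ} (hv : v ≠ 0) : 0 < e2norm v := by
  rw [e2norm, Real.sqrt_pos]
  obtain ⟨i, hi⟩ : ∃ i, v i ≠ 0 := by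
    by_contra h; push_neg at h; exact hv (funext h)
  exact Finset.sum_pos' (fun j _ => sq_nonneg _) ⟨i, Finset.mem_univ i, by positivity⟩

lemma sum_sq_pos' {n : ℕ} {v : Fin n → ℝ} (hv : v ≠ 0) : 0 < ∑ i, v i ^ 2 := by
  have h := e2norm_pos' hv
  rw [e2norm, Real.sqrt_pos] at h; exact h

lemma e2norm_eq' {n : ℕ} (v : Fin n → ℝ) :
    e2norm v = ‖(WithLp.equiv 2 (Fin n → ℝ)).symm v‖ := by
  rw [EuclideanSpace.norm_eq]
  simp [e2norm, sq_abs]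

lemma e2norm_sum_le' {n : ℕ} {ι : Type*} (s : Finset ι) (g : ι → (Fin n → ℝ)) :
    e2norm (∑ i ∈ s, g i) ≤ ∑ i ∈ s, e2norm (g i) := by
  simp only [e2norm_eq']
  rw [show (WithLp.equiv 2 (Fin n → ℝ)).symm (∑ i ∈ s, g i)
      = ∑ i ∈ s, (WithLp.equiv 2 (Fin n → ℝ)).symm (g i) from
    map_sum (WithLp.linearEquiv 2 ℝ (Fin n → ℝ)).symm _ _]
  exact norm_sum_le _ _

lemma cont_e2norm' {n : ℕ} : Continuous (e2norm : (Fin n → ℝ) → ℝ) := by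
  unfold e2norm; fun_prop

lemma cont_e2norm_mulVec' {n k : ℕ} (M : Matrix (Fin n) (Fin k) ℝ) :
    Continuous fun x : Fin k → ℝ => e2norm (M.mulVec x) := by
  unfold e2norm Matrix.mulVec dotProduct; fun_prop

lemma sphere_cpt' {k : ℕ} : IsCompact {x : Fin k → ℝ | e2norm x = 1} := by
  apply Metric.isCompact_of_isClosed_isBounded
  · exact isClosed_eq cont_e2norm' continuous_const
  · apply Bornology.IsBounded.subset (Metric.isBounded_closedBall (x := (0 : Fin k → ℝ)) (r := 1))
    intro x hx
    simp only [Metric.mem_closedBall, dist_zero_right]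
    rw [pi_norm_le_iff_of_nonneg zero_le_one]
    intro i
    calc ‖x i‖ = Real.sqrt (x i ^ 2) := (Real.sqrt_sq_eq_abs _).symm
      _ ≤ Real.sqrt (∑ j, x j ^ 2) := Real.sqrt_le_sqrt
          (Finset.single_le_sum (fun j _ => sq_nonneg (x j)) (Finset.mem_univ i))
      _ = 1 := hx

lemma specNorm_bddAbove' {n k : ℕ} (M : Matrix (Fin n) (Fin k) ℝ) :
    BddAbove ((fun x => e2norm (M.mulVec x)) '' {x : Fin k → ℝ | e2norm x = 1}) :=
  (sphere_cpt'.image (cont_e2norm_mulVec' M)).bddAbove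

lemma e2norm_mulVec_le' {n k : ℕ} (M : Matrix (Fin n) (Fin k) ℝ) (x : Fin k → ℝ) :
    e2norm (M.mulVec x) ≤ specNorm M * e2norm x := by
  rcases eq_or_ne x 0 with rfl | hx
  · simp [Matrix.mulVec_zero]
    unfold e2norm; simp
  · have hc : 0 < e2norm x := e2norm_pos' hx
    set c := e2norm x with hcdef
    have hy : e2norm (c⁻¹ • x) = 1 := by
      rw [e2norm_smul', abs_of_pos (by positivity)]; field_simp; exact hcdef.symm
    have hmem : e2norm (M.mulVec (c⁻¹ • x)) ∈
        ((fun x => e2norm (M.mulVec x)) '' {x : Fin k → ℝ | e2norm x = 1}) :=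
      ⟨c⁻¹ • x, hy, rfl⟩
    have hle : e2norm (M.mulVec (c⁻¹ • x)) ≤ specNorm M := le_csSup (specNorm_bddAbove' M) hmem
    have hxc : x = c • (c⁻¹ • x) := by rw [smul_smul]; field_simp; rw [one_smul]
    calc e2norm (M.mulVec x) = e2norm (M.mulVec (c • (c⁻¹ • x))) := by rw [← hxc]
      _ = |c| * e2norm (M.mulVec (c⁻¹ • x)) := by rw [Matrix.mulVec_smul, e2norm_smul']
      _ ≤ c * specNorm M := by rw [abs_of_pos hc]; exact mul_le_mul_of_nonneg_left hle hc.le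
      _ = specNorm M * e2norm x := by rw [mul_comm]

lemma specNorm_exists' {n k : ℕ} (hk : 1 ≤ k) (M : Matrix (Fin n) (Fin k) ℝ) :
    ∃ p : Fin k → ℝ, e2norm p = 1 ∧ e2norm (M.mulVec p) = specNorm M := by
  have hne : {x : Fin k → ℝ | e2norm x = 1}.Nonempty := by
    refine ⟨fun j => if j = ⟨0, hk⟩ then 1 else 0, ?_⟩
    have h : ∀ j : Fin k, ((if j = (⟨0, hk⟩ : Fin k) then (1:ℝ) else 0)) ^ 2
        = if j = ⟨0, hk⟩ then (1:ℝ) else 0 := by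
      intro j; rcases eq_or_ne j ⟨0, hk⟩ with rfl | hj <;> simp [*]
    show e2norm _ = 1
    rw [e2norm, Finset.sum_congr rfl (fun j _ => h j), Finset.sum_ite_eq' Finset.univ]
    simp
  have hK : IsCompact ((fun x => e2norm (M.mulVec x)) '' {x : Fin k → ℝ | e2norm x = 1}) :=
    sphere_cpt'.image (cont_e2norm_mulVec' M)
  obtain ⟨p, hp, hval⟩ := hK.sSup_mem (hne.image _)
  exact ⟨p, hp, hval⟩

lemma specNorm_nonneg' {n k : ℕ} (hk : 1 ≤ k) (M : Matrix (Fin n) (Fin k) ℝ) :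
    0 ≤ specNorm M := by
  obtain ⟨p, _, hval⟩ := specNorm_exists' hk M
  rw [← hval]; exact Real.sqrt_nonneg _

lemma sum_sq_expand' {n : ℕ} (q v : Fin n → ℝ) :
    ∑ i, ∑ j, (q i * v j + v i * q j) ^ 2
      = 2 * ((∑ i, q i ^ 2) * (∑ i, v i ^ 2)) + 2 * (∑ i, q i * v i) ^ 2 := by
  have h : ∀ i j : Fin n, (q i * v j + v i * q j) ^ 2
      = q i ^ 2 * v j ^ 2 + v i ^ 2 * q j ^ 2 + 2 * ((q i * v i) * (q j * v j)) := by
    intro i j; ring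
  simp only [h, Finset.sum_add_distrib, ← Finset.mul_sum, ← Finset.sum_mul]
  ring

lemma frobNorm_sq' {n m : ℕ} (M : Matrix (Fin n) (Fin m) ℝ) :
    frobNorm M ^ 2 = ∑ i, ∑ j, M i j ^ 2 :=
  Real.sq_sqrt (Finset.sum_nonneg fun i _ => Finset.sum_nonneg fun j _ => sq_nonneg _)

lemma frobNorm_nonneg' {n m : ℕ} (M : Matrix (Fin n) (Fin m) ℝ) : 0 ≤ frobNorm M :=
  Real.sqrt_nonneg _

lemma frobNorm_smul' {n m : ℕ} (c : ℝ) (M : Matrix (Fin n) (Fin m) ℝ) :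
    frobNorm (c • M) = |c| * frobNorm M := by
  unfold frobNorm
  have h : ∑ i, ∑ j, (c • M) i j ^ 2 = c ^ 2 * ∑ i, ∑ j, M i j ^ 2 := by
    rw [Finset.mul_sum]
    refine Finset.sum_congr rfl fun i _ => ?_
    rw [Finset.mul_sum]
    exact Finset.sum_congr rfl fun j _ => by simp [mul_pow]
  rw [h, Real.sqrt_mul (sq_nonneg c), Real.sqrt_sq_eq_abs]

lemma sym_bound' {n : ℕ} (E : Matrix (Fin n) (Fin n) ℝ) (hE : Eᵀ = E) (v q : Fin n → ℝ)
    (hqv : ∑ i, q i * v i = 0) :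
    Real.sqrt 2 * (∑ i, q i * (E.mulVec v) i) ≤ frobNorm E * (e2norm q * e2norm v) := by
  have hEsym : ∀ i j, E j i = E i j := fun i j => by
    have := congrFun (congrFun hE i) j
    simpa using this
  set T := ∑ i, q i * (E.mulVec v) i with hT
  have hT1 : T = ∑ i, ∑ j, E i j * (q i * v j) := by
    apply Finset.sum_congr rfl; intro i _
    simp only [Matrix.mulVec, dotProduct, Finset.mul_sum]
    exact Finset.sum_congr rfl fun j _ => by ring
  have hT2 : T = ∑ i, ∑ j, E i j * (v i * q j) := by
    rw [hT1, Finset.sum_comm]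
    apply Finset.sum_congr rfl; intro i _
    apply Finset.sum_congr rfl; intro j _
    rw [hEsym i j]; ring
  have h2T : 2 * T = ∑ i, ∑ j, E i j * (q i * v j + v i * q j) := by
    simp only [mul_add, Finset.sum_add_distrib, ← hT1, ← hT2]; ring
  have hCS : (∑ p : Fin n × Fin n, E p.1 p.2 * (q p.1 * v p.2 + v p.1 * q p.2)) ^ 2
      ≤ (∑ p : Fin n × Fin n, E p.1 p.2 ^ 2)
        * (∑ p : Fin n × Fin n, (q p.1 * v p.2 + v p.1 * q p.2) ^ 2) :=
    Finset.sum_mul_sq_le_sq_mul_sq Finset.univ _ _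
  rw [Fintype.sum_prod_type, Fintype.sum_prod_type, Fintype.sum_prod_type] at hCS
  rw [← h2T, sum_sq_expand', hqv] at hCS
  have hQ : ∑ i, q i ^ 2 = e2norm q ^ 2 := (e2norm_sq' q).symm
  have hV : ∑ i, v i ^ 2 = e2norm v ^ 2 := (e2norm_sq' v).symm
  have hF : ∑ i, ∑ j, E i j ^ 2 = frobNorm E ^ 2 := (frobNorm_sq' E).symm
  rw [hQ, hV, hF] at hCS
  have key : (Real.sqrt 2 * T) ^ 2 ≤ (frobNorm E * (e2norm q * e2norm v)) ^ 2 := by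
    have h2 : Real.sqrt 2 ^ 2 = 2 := Real.sq_sqrt (by norm_num)
    nlinarith [hCS]
  calc Real.sqrt 2 * T ≤ |Real.sqrt 2 * T| := le_abs_self _
    _ = Real.sqrt ((Real.sqrt 2 * T) ^ 2) := (Real.sqrt_sq_eq_abs _).symm
    _ ≤ Real.sqrt ((frobNorm E * (e2norm q * e2norm v)) ^ 2) := Real.sqrt_le_sqrt key
    _ = frobNorm E * (e2norm q * e2norm v) := Real.sqrt_sq
        (mul_nonneg (frobNorm_nonneg' E) (mul_nonneg (e2norm_nonneg' q) (e2norm_nonneg' v)))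

/-- for symmetric perturbations measured in the Frobenius norm,
the eigenvector condition number equals `(1/√2) ‖Z‖₂ Σᵢ |fᵢ| wᵢ`. -/
theorem symmetric_eigenvector_condition_number_frobenius
    {n m : ℕ} (hn : 1 ≤ n) (hm : 1 ≤ m)
    (J : Matrix (Fin n) (Fin n) ℝ) (lam : ℝ)
    (hsimple : Polynomial.rootMultiplicity lam J.charpoly = 1)
    (v : Fin n → ℝ) (hv : v ≠ 0) (heig : J.mulVec v = lam • v)
    (V : Matrix (Fin n) (Fin (n - 1)) ℝ)
    (hrank : V.rank = n - 1) (hVv : Vᵀ.mulVec v = 0)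
    (f w : Fin m → ℝ) (hw : ∀ i, 0 ≤ w i) :
    IsGreatest
      {s : ℝ | ∃ E : Fin m → Matrix (Fin n) (Fin n) ℝ,
        (∀ i, (E i)ᵀ = E i) ∧
        (∀ i, frobNorm (E i) ≤ w i) ∧
        s = e2norm ((V * (Vᵀ * (J - lam • 1) * V)⁻¹ * Vᵀ).mulVec
              (∑ i, f i • (E i).mulVec v)) / e2norm v}
      ((1 / Real.sqrt 2) *
        specNorm (V * (Vᵀ * (J - lam • 1) * V)⁻¹ * Vᵀ) * ∑ i, |f i| * w i) := by
  set Z := V * (Vᵀ * (J - lam • 1) * V)⁻¹ * Vᵀ with hZdef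
  have hZv : Z.mulVec v = 0 := by
    rw [hZdef, ← Matrix.mulVec_mulVec, hVv, Matrix.mulVec_zero]
  have hvpos : 0 < e2norm v := e2norm_pos' hv
  have hVsq : 0 < ∑ j, v j ^ 2 := sum_sq_pos' hv
  have hs2 : (0:ℝ) < Real.sqrt 2 := Real.sqrt_pos.mpr two_pos
  have hS0 : 0 ≤ specNorm Z := specNorm_nonneg' hn Z
  constructor
  · -- membership: the bound is attained
    rcases hS0.eq_or_lt with hS | hS
    · -- degenerate case specNorm Z = 0 : take E = 0
      refine ⟨fun _ => 0, fun i => by simp, fun i => ?_, ?_⟩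
      · have : frobNorm (0 : Matrix (Fin n) (Fin n) ℝ) = 0 := by simp [frobNorm]
        rw [this]; exact hw i
      · rw [← hS]
        simp [Matrix.zero_mulVec, e2norm_zero']
    · -- specNorm Z > 0
      obtain ⟨p, hp1, hpS⟩ := specNorm_exists' hn Z
      set c := (∑ j, p j * v j) / (∑ j, v j ^ 2) with hc
      set p' := p - c • v with hp'
      have hZp' : Z.mulVec p' = Z.mulVec p := by
        rw [hp', Matrix.mulVec_sub, Matrix.mulVec_smul, hZv, smul_zero, sub_zero]
      have hpv : ∑ j, p j * v j = c * (∑ j, v j ^ 2) := by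
        rw [hc]; field_simp
      have hperp' : ∑ j, p' j * v j = 0 := by
        have h : ∀ j, p' j * v j = p j * v j - c * (v j ^ 2) := by
          intro j; simp only [hp', Pi.sub_apply, Pi.smul_apply, smul_eq_mul]; ring
        rw [Finset.sum_congr rfl fun j _ => h j, Finset.sum_sub_distrib, ← Finset.mul_sum,
          hpv, sub_self]
      have hpsq : ∑ j, p j ^ 2 = 1 := by
        have := e2norm_sq' p; rw [hp1] at this; simpa using this.symm
      have hp'sq : ∑ j, p' j ^ 2 ≤ 1 := by
        have h : ∀ j, p' j ^ 2 = p j ^ 2 - 2 * c * (p j * v j) + c ^ 2 * v j ^ 2 := by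
          intro j; simp only [hp', Pi.sub_apply, Pi.smul_apply, smul_eq_mul]; ring
        rw [Finset.sum_congr rfl fun j _ => h j]
        rw [Finset.sum_add_distrib, Finset.sum_sub_distrib, ← Finset.mul_sum, ← Finset.mul_sum,
          hpv, hpsq]
        nlinarith [sq_nonneg c, hVsq]
      have hp'ne : p' ≠ 0 := by
        intro h
        rw [h, Matrix.mulVec_zero] at hZp'
        rw [← hZp', e2norm_zero'] at hpS
        exact hS.ne hpS
      set t := e2norm p' with ht
      have htpos : 0 < t := e2norm_pos' hp'ne
      have htle : t ≤ 1 := by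
        rw [ht, e2norm]
        calc Real.sqrt (∑ j, p' j ^ 2) ≤ Real.sqrt 1 := Real.sqrt_le_sqrt hp'sq
          _ = 1 := Real.sqrt_one
      set q := t⁻¹ • p' with hq
      have hq1 : e2norm q = 1 := by
        rw [hq, e2norm_smul', abs_of_pos (inv_pos.mpr htpos), ← ht]
        field_simp
      have hqv : ∑ j, q j * v j = 0 := by
        have h : ∀ j, q j * v j = t⁻¹ * (p' j * v j) := by
          intro j; simp only [hq, Pi.smul_apply, smul_eq_mul]; ring
        rw [Finset.sum_congr rfl fun j _ => h j, ← Finset.mul_sum, hperp', mul_zero]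
      have hqsq : ∑ j, q j ^ 2 = 1 := by
        have := e2norm_sq' q; rw [hq1] at this; simpa using this.symm
      have hZqe : Z.mulVec q = t⁻¹ • Z.mulVec p := by
        rw [hq, Matrix.mulVec_smul, hZp']
      have hupper : e2norm (Z.mulVec q) ≤ specNorm Z := by
        have h := e2norm_mulVec_le' Z q; rwa [hq1, mul_one] at h
      have hlower : specNorm Z ≤ e2norm (Z.mulVec q) := by
        rw [hZqe, e2norm_smul', abs_of_pos (inv_pos.mpr htpos), hpS]
        have h1 : 1 ≤ t⁻¹ := one_le_inv_iff₀.mpr ⟨htpos, htle⟩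
        exact le_mul_of_one_le_left hS.le h1
      have hZq : e2norm (Z.mulVec q) = specNorm Z := le_antisymm hupper hlower
      set Mq : Matrix (Fin n) (Fin n) ℝ := Matrix.of (fun a b => q a * v b + v a * q b)
        with hMq
      have hMqF : frobNorm Mq = Real.sqrt 2 * e2norm v := by
        unfold frobNorm
        have h : ∑ a, ∑ b, Mq a b ^ 2 = 2 * (∑ j, v j ^ 2) := by
          have := sum_sq_expand' q v
          rw [hqsq, hqv] at this
          simpa [hMq] using this
        rw [h, Real.sqrt_mul (by norm_num : (0:ℝ) ≤ 2)]
        rfl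
      have hMqv : Mq.mulVec v = (∑ j, v j ^ 2) • q := by
        funext a
        show ∑ b, Mq a b * v b = _
        have h : ∀ b, Mq a b * v b = q a * v b ^ 2 + v a * (q b * v b) := by
          intro b; simp only [hMq, Matrix.of_apply]; ring
        rw [Finset.sum_congr rfl fun b _ => h b, Finset.sum_add_distrib, ← Finset.mul_sum,
          ← Finset.mul_sum, hqv, mul_zero, add_zero]
        simp [mul_comm]
      refine ⟨fun i => ((if 0 ≤ f i then (1:ℝ) else -1) * w i / (Real.sqrt 2 * e2norm v)) • Mq,
        ?_, ?_, ?_⟩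
      · intro i
        rw [Matrix.transpose_smul]
        congr 1
        ext a b
        simp only [hMq, Matrix.transpose_apply, Matrix.of_apply]
        ring
      · intro i
        rw [frobNorm_smul', hMqF]
        have habs : |(if 0 ≤ f i then (1:ℝ) else -1) * w i / (Real.sqrt 2 * e2norm v)|
            = w i / (Real.sqrt 2 * e2norm v) := by
          rw [abs_div, abs_mul]
          have h1 : |(if 0 ≤ f i then (1:ℝ) else -1)| = 1 := by split <;> simp
          rw [h1, one_mul, abs_of_nonneg (hw i), abs_of_pos (mul_pos hs2 hvpos)]
        rw [habs, div_mul_cancel₀ _ (mul_pos hs2 hvpos).ne']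
      · have hterm : ∀ i, f i • (((if 0 ≤ f i then (1:ℝ) else -1) * w i
            / (Real.sqrt 2 * e2norm v)) • Mq).mulVec v
            = (|f i| * w i * (∑ j, v j ^ 2) / (Real.sqrt 2 * e2norm v)) • q := by
          intro i
          rw [Matrix.smul_mulVec, hMqv, smul_smul, smul_smul]
          congr 1
          rcases le_or_gt 0 (f i) with h | h
          · rw [if_pos h, abs_of_nonneg h]; ring
          · rw [if_neg (not_le.mpr h), abs_of_neg h]; ring
        have hsum : (∑ i, f i • (((if 0 ≤ f i then (1:ℝ) else -1) * w i
            / (Real.sqrt 2 * e2norm v)) • Mq).mulVec v)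
            = ((∑ i, |f i| * w i) * (∑ j, v j ^ 2) / (Real.sqrt 2 * e2norm v)) • q := by
          rw [Finset.sum_congr rfl fun i _ => hterm i, ← Finset.sum_smul]
          congr 1
          rw [Finset.sum_mul, Finset.sum_div]
        have hscalnn : 0 ≤ (∑ i, |f i| * w i) * (∑ j, v j ^ 2) / (Real.sqrt 2 * e2norm v) :=
          div_nonneg (mul_nonneg (Finset.sum_nonneg fun i _ =>
            mul_nonneg (abs_nonneg _) (hw i)) hVsq.le) (mul_pos hs2 hvpos).le
        rw [hsum, Matrix.mulVec_smul, e2norm_smul', abs_of_nonneg hscalnn, hZq]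
        rw [show ∑ j, v j ^ 2 = e2norm v ^ 2 from (e2norm_sq' v).symm]
        have h1 : e2norm v ≠ 0 := hvpos.ne'
        have h2 : Real.sqrt 2 ≠ 0 := hs2.ne'
        field_simp
  · -- upper bound
    rintro s ⟨E, hsym, hF, rfl⟩
    have key : ∀ i : Fin m, e2norm (Z.mulVec ((E i).mulVec v))
        ≤ specNorm Z * (w i * e2norm v / Real.sqrt 2) := by
      intro i
      set b := (E i).mulVec v with hb
      set α := (∑ j, b j * v j) / (∑ j, v j ^ 2) with hα
      set u := b - α • v with hu
      have hbu : b = u + α • v := by rw [hu]; abel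
      have hbv : ∑ j, b j * v j = α * (∑ j, v j ^ 2) := by
        rw [hα]; field_simp
      have hperp : ∑ j, u j * v j = 0 := by
        have h : ∀ j, u j * v j = b j * v j - α * (v j ^ 2) := by
          intro j; simp only [hu, Pi.sub_apply, Pi.smul_apply, smul_eq_mul]; ring
        rw [Finset.sum_congr rfl fun j _ => h j, Finset.sum_sub_distrib, ← Finset.mul_sum,
          hbv, sub_self]
      have hinner : ∑ j, u j * b j = ∑ j, u j ^ 2 := by
        have h : ∀ j, u j * b j = u j ^ 2 + α * (u j * v j) := by
          intro j
          rw [hbu]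
          simp only [Pi.add_apply, Pi.smul_apply, smul_eq_mul]
          ring
        rw [Finset.sum_congr rfl fun j _ => h j, Finset.sum_add_distrib, ← Finset.mul_sum,
          hperp, mul_zero, add_zero]
      have hsb := sym_bound' (E i) (hsym i) v u hperp
      rw [← hb, hinner] at hsb
      rw [show ∑ j, u j ^ 2 = e2norm u ^ 2 from (e2norm_sq' u).symm] at hsb
      have hu_le : e2norm u ≤ frobNorm (E i) * e2norm v / Real.sqrt 2 := by
        rcases eq_or_lt_of_le (e2norm_nonneg' u) with h0 | h0
        · rw [← h0]
          exact div_nonneg (mul_nonneg (frobNorm_nonneg' _) (e2norm_nonneg' v)) hs2.le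
        · rw [le_div_iff₀ hs2]
          nlinarith [hsb, h0]
      have hZb : Z.mulVec b = Z.mulVec u := by
        rw [hbu, Matrix.mulVec_add, Matrix.mulVec_smul, hZv, smul_zero, add_zero]
      calc e2norm (Z.mulVec b) = e2norm (Z.mulVec u) := by rw [hZb]
        _ ≤ specNorm Z * e2norm u := e2norm_mulVec_le' Z u
        _ ≤ specNorm Z * (frobNorm (E i) * e2norm v / Real.sqrt 2) :=
            mul_le_mul_of_nonneg_left hu_le hS0
        _ ≤ specNorm Z * (w i * e2norm v / Real.sqrt 2) := by
            refine mul_le_mul_of_nonneg_left ?_ hS0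
            exact (div_le_div_iff_of_pos_right hs2).mpr
              (mul_le_mul_of_nonneg_right (hF i) (e2norm_nonneg' v))
    rw [div_le_iff₀ hvpos]
    have hrw : Z.mulVec (∑ i, f i • (E i).mulVec v) = ∑ i, f i • Z.mulVec ((E i).mulVec v) := by
      have h0 : Z.mulVec (∑ i, f i • (E i).mulVec v)
          = Z.mulVecLin (∑ i, f i • (E i).mulVec v) := rfl
      rw [h0, map_sum]
      exact Finset.sum_congr rfl fun i _ => by rw [_root_.map_smul]; rfl
    calc e2norm (Z.mulVec (∑ i, f i • (E i).mulVec v))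
        = e2norm (∑ i, f i • Z.mulVec ((E i).mulVec v)) := by rw [hrw]
      _ ≤ ∑ i, e2norm (f i • Z.mulVec ((E i).mulVec v)) := e2norm_sum_le' _ _
      _ = ∑ i, |f i| * e2norm (Z.mulVec ((E i).mulVec v)) :=
          Finset.sum_congr rfl fun i _ => e2norm_smul' _ _
      _ ≤ ∑ i, |f i| * (specNorm Z * (w i * e2norm v / Real.sqrt 2)) :=
          Finset.sum_le_sum fun i _ => mul_le_mul_of_nonneg_left (key i) (abs_nonneg _)
      _ = (1 / Real.sqrt 2 * specNorm Z * ∑ i, |f i| * w i) * e2norm v := by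
          rw [Finset.mul_sum, Finset.sum_mul]
          exact Finset.sum_congr rfl fun i _ => by ring
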